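/- Suppose a family of symmetric polynomials P_{g,n}(μ_1,…,μ_n) (depending on residues ⟨μ_i/r⟩) exists such that h_{g,μ} = b!·(∏_i μ_i^{⌊μ_i/r⌋}/⌊μ_i/r⌋!)·P_{g,n}(μ) where b = 2g-2+n+|μ|/r. Then the n-point generating function H_{g,n}(x_1,…,x_n) = ∑_μ (h_{g,μ}/b!)·∏ x_i^{μ_i} is, after the substitution x_i = z_i e^{-z_i^r}, a rational function of z_1,…,z_n (i.e., the generating series equals the expansion at z = 0 of a finite linear combination of products of the functions ((z/(1-rz^r)) d/dz)^j (z^η/(1-rz^r))). -/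

import Mathlib

open PowerSeries

noncomputable section

/-- The formal power series `exp(-z^r)`. -/
def expNegZr (r : ℕ) : PowerSeries ℚ :=
  PowerSeries.mk fun n => if r ∣ n then (-1 : ℚ)^(n/r) / (n/r).factorial else 0

/-- The spectral-curve coordinate `x(z) = z·e^{-z^r}` as a power series in `z`. -/
def xser (r : ℕ) : PowerSeries ℚ := X * expNegZr r

/-- The Euler operator `x·d/dx = (z/(1 - r z^r))·d/dz` on power series in `z`. -/
def eulerOp (r : ℕ) (f : PowerSeries ℚ) : PowerSeries ℚ :=
  X * (1 - C (r : ℚ) * X^r)⁻¹ * derivative ℚ f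

/-- The basic rational building blocks `((z/(1-rz^r)) d/dz)^j (z^η/(1-rz^r))`. -/
def basisFun (r η j : ℕ) : PowerSeries ℚ :=
  (eulerOp r)^[j] ((X : PowerSeries ℚ)^η * (1 - C (r : ℚ) * X^r)⁻¹)

section Aux
open Finset fwdDiff

def Eser (r : ℕ) (a : ℚ) : PowerSeries ℚ :=
  PowerSeries.mk fun n => if r ∣ n then a^(n/r) / (n/r).factorial else 0

lemma factq (k : ℕ) : ((k.factorial : ℚ)) ≠ 0 := Nat.cast_ne_zero.mpr k.factorial_ne_zero

lemma nat_mul_sub (r M s : ℕ) : r*M - r*s = r*(M-s) := by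
  rw [Nat.mul_comm r (M-s), Nat.sub_mul, Nat.mul_comm M r, Nat.mul_comm s r]

lemma sum_multiples {f : ℕ → ℚ} (r M : ℕ) (hr : 1 ≤ r)
    (hf : ∀ i, ¬ r ∣ i → f i = 0) :
    ∑ i ∈ range (r*M+1), f i = ∑ s ∈ range (M+1), f (r*s) := by
  have hinj : ∀ a ∈ range (M+1), ∀ b ∈ range (M+1),
      (fun s => r*s) a = (fun s => r*s) b → a = b :=
    fun a _ b _ h => Nat.eq_of_mul_eq_mul_left hr h
  calc ∑ i ∈ range (r*M+1), f i
      = ∑ i ∈ (range (M+1)).image (fun s => r*s), f i := by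
        apply (Finset.sum_subset ?_ ?_).symm
        · intro x hx
          simp only [Finset.mem_image, Finset.mem_range] at hx ⊢
          obtain ⟨s, hs, rfl⟩ := hx
          have h1 : s ≤ M := by omega
          have : r*s ≤ r*M := Nat.mul_le_mul_left r h1
          omega
        · intro x hx hnx
          apply hf
          rintro ⟨s, rfl⟩
          apply hnx
          simp only [Finset.mem_image, Finset.mem_range] at hx ⊢
          refine ⟨s, ?_, rfl⟩
          by_contra hc
          have h2 : M + 1 ≤ s := by omega
          have : r*(M+1) ≤ r*s := Nat.mul_le_mul_left r h2
          have : r*M + r ≤ r*s := by rw [Nat.mul_add, Nat.mul_one] at this; omega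
          omega
    _ = ∑ s ∈ range (M+1), f (r*s) := Finset.sum_image hinj

lemma Eser_mul (r : ℕ) (hr : 1 ≤ r) (a b : ℚ) : Eser r a * Eser r b = Eser r (a+b) := by
  ext N
  rw [coeff_mul, Finset.Nat.sum_antidiagonal_eq_sum_range_succ_mk]
  simp only [Eser, coeff_mk]
  by_cases hN : r ∣ N
  · obtain ⟨M, rfl⟩ := hN
    rw [if_pos (Dvd.intro M rfl)]
    rw [sum_multiples r M hr (fun i hi => by rw [if_neg hi, zero_mul])]
    have key : ∀ s ∈ range (M+1), (if r ∣ r*s then a^((r*s)/r) / ((r*s)/r).factorial else 0) *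
        (if r ∣ (r*M - r*s) then b^((r*M-r*s)/r) / ((r*M-r*s)/r).factorial else 0)
        = (M.choose s : ℚ) * (a^s * b^(M-s)) / M.factorial := by
      intro s hs
      simp only [Finset.mem_range] at hs
      have hsM : s ≤ M := by omega
      have h2 : r*M - r*s = r*(M-s) := nat_mul_sub r M s
      rw [if_pos ⟨s, rfl⟩, if_pos ⟨M-s, h2⟩, Nat.mul_div_cancel_left s hr, h2,
        Nat.mul_div_cancel_left _ hr]
      have hc : (M.choose s : ℚ) * s.factorial * (M-s).factorial = M.factorial := by
        exact_mod_cast congrArg (Nat.cast : ℕ → ℚ) (Nat.choose_mul_factorial_mul_factorial hsM)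
      rw [div_mul_div_comm, div_eq_div_iff (by positivity) (factq M)]
      linear_combination (-(a^s * b^(M-s))) * hc
    rw [Finset.sum_congr rfl key, ← Finset.sum_div, add_pow]
    rw [Nat.mul_div_cancel_left M hr]
    congr 1
    apply Finset.sum_congr rfl
    intro s hs; ring
  · rw [if_neg hN]
    apply Finset.sum_eq_zero
    intro i hi
    simp only [Finset.mem_range] at hi
    by_cases h1 : r ∣ i
    · have h2 : ¬ r ∣ (N - i) := by
        intro h
        exact hN (by have := Nat.dvd_add h1 h; rwa [Nat.add_sub_cancel' (by omega)] at this)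
      rw [if_neg h2, mul_zero]
    · rw [if_neg h1, zero_mul]
-- defs from statement
lemma Eser_zero (r : ℕ) (hr : 1 ≤ r) : Eser r 0 = 1 := by
  ext n
  simp only [Eser, coeff_mk, coeff_one]
  rcases Nat.eq_zero_or_pos n with rfl | hn
  · simp
  · rw [if_neg (by omega : ¬ n = 0)]
    by_cases h : r ∣ n
    · rw [if_pos h]
      have : 1 ≤ n / r := Nat.one_le_div_iff (by omega) |>.mpr (Nat.le_of_dvd hn h)
      rw [zero_pow (by omega), zero_div]
    · rw [if_neg h]

lemma expNegZr_eq (r : ℕ) : expNegZr r = Eser r (-1) := rfl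

lemma expNegZr_pow (r : ℕ) (hr : 1 ≤ r) (m : ℕ) :
    (expNegZr r)^m = Eser r (-(m:ℚ)) := by
  induction m with
  | zero => simpa using (Eser_zero r hr).symm
  | succ m ih =>
    rw [pow_succ, ih, expNegZr_eq, Eser_mul r hr]
    norm_num [add_comm]

lemma coeff_xser_pow (r : ℕ) (hr : 1 ≤ r) (m d : ℕ) :
    coeff d ((xser r)^m) =
      if m ≤ d ∧ r ∣ (d - m) then (-(m:ℚ))^((d-m)/r) / ((d-m)/r).factorial else 0 := by
  have : (xser r)^m = X^m * Eser r (-(m:ℚ)) := by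
    rw [xser, mul_pow, expNegZr_pow r hr]
  rw [this, coeff_X_pow_mul']
  by_cases h : m ≤ d
  · rw [if_pos h]
    simp only [Eser, coeff_mk]
    by_cases h2 : r ∣ (d - m)
    · rw [if_pos h2, if_pos ⟨h, h2⟩]
    · rw [if_neg h2, if_neg (by tauto)]
  · rw [if_neg h, if_neg (by tauto)]

def Gser (r : ℕ) : PowerSeries ℚ :=
  PowerSeries.mk fun n => if r ∣ n then (r:ℚ)^(n/r) else 0

lemma constCoeff_unit (r : ℕ) (hr : 1 ≤ r) :
    constantCoeff (1 - C (r:ℚ) * X^r) ≠ 0 := by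
  simp [map_sub, map_mul, map_pow, constantCoeff_X, zero_pow (by omega : r ≠ 0)]

lemma Gser_eq (r : ℕ) (hr : 1 ≤ r) : (1 - C (r:ℚ) * X^r)⁻¹ = Gser r := by
  rw [eq_comm, PowerSeries.eq_inv_iff_mul_eq_one (constCoeff_unit r hr)]
  ext n
  rw [mul_sub, mul_one, map_sub, coeff_one]
  have h1 : Gser r * (C (r:ℚ) * X^r) = C (r:ℚ) * (Gser r * X^r) := by ring
  rw [h1, coeff_C_mul, coeff_mul_X_pow']
  simp only [Gser, coeff_mk]
  rcases Nat.eq_zero_or_pos n with rfl | hn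
  · rw [if_pos (dvd_zero r), if_neg (by omega : ¬ r ≤ 0), if_pos rfl]
    norm_num
  · rw [if_neg (by omega : ¬ n = 0)]
    by_cases h : r ∣ n
    · have hrn : r ≤ n := Nat.le_of_dvd hn h
      rw [if_pos h, if_pos hrn, if_pos ((Nat.dvd_sub h dvd_rfl))]
      have h3 : (n - r)/r = n/r - 1 := by
        obtain ⟨c, rfl⟩ := h
        rw [Nat.mul_div_cancel_left c (by omega)]
        have : r*c - r = r*(c-1) := by
          rw [Nat.mul_comm r (c-1), Nat.sub_mul, Nat.mul_comm c r]; omega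
        rw [this, Nat.mul_div_cancel_left _ (by omega)]
      have h4 : 1 ≤ n / r := Nat.one_le_div_iff (by omega) |>.mpr hrn
      rw [h3]
      have h5 : n / r = (n/r - 1) + 1 := by omega
      conv_lhs => rw [h5, pow_succ']
      rw [Nat.add_sub_cancel]
      ring
    · rw [if_neg h]
      by_cases h2 : r ≤ n
      · rw [if_pos h2, if_neg ?_]
        · ring
        · intro hd
          exact h (by have := Nat.dvd_add hd (dvd_refl r); rwa [Nat.sub_add_cancel h2] at this)
      · rw [if_neg h2]; ring
lemma deriv_expNegZr (r : ℕ) (hr : 1 ≤ r) :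
    derivative ℚ (expNegZr r) = C (-(r:ℚ)) * X^(r-1) * expNegZr r := by
  ext n
  rw [coeff_derivative]
  have h1 : C (-(r:ℚ)) * X^(r-1) * expNegZr r = C (-(r:ℚ)) * (X^(r-1) * expNegZr r) :=
    by ring
  rw [h1, coeff_C_mul, coeff_X_pow_mul']
  simp only [expNegZr, coeff_mk]
  by_cases h : r ∣ (n+1)
  · obtain ⟨c, hc⟩ := h
    have hc1 : 1 ≤ c := by rcases Nat.eq_zero_or_pos c with rfl | hp; · omega
                           · exact hp
    have hrc : r * 1 ≤ r * c := Nat.mul_le_mul_left r hc1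
    have hr1 : r - 1 ≤ n := by rw [Nat.mul_one] at hrc; omega
    rw [if_pos ⟨c, hc⟩, if_pos hr1]
    have h2 : r ∣ (n - (r-1)) :=
      ⟨c - 1, by rw [Nat.mul_comm r (c-1), Nat.sub_mul, Nat.mul_comm c r]; omega⟩
    rw [if_pos h2]
    have e1 : (n+1)/r = c := by rw [hc, Nat.mul_div_cancel_left _ (by omega)]
    have e2 : (n - (r-1)) = r * (c-1) := by
      rw [Nat.mul_comm r (c-1), Nat.sub_mul, Nat.mul_comm c r]; omega
    rw [e1, e2, Nat.mul_div_cancel_left _ (by omega)]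
    -- (-1)^c / c! * (n+1) = -r * ((-1)^(c-1)/(c-1)!)
    have e3 : (n+1 : ℚ) = (r : ℚ) * c := by exact_mod_cast congrArg (Nat.cast : ℕ → ℚ) hc
    have e4 : (c.factorial : ℚ) = c * (c-1).factorial := by
      exact_mod_cast congrArg (Nat.cast : ℕ → ℚ) (Nat.mul_factorial_pred (by omega)).symm
    have e5 : ((-1:ℚ))^c = -(-1:ℚ)^(c-1) := by
      conv_lhs => rw [show c = (c-1)+1 by omega, pow_succ]
      ring
    rw [e3, e4, e5]
    have hne : ((c:ℚ)) ≠ 0 := by positivity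
    field_simp
  · rw [if_neg h]
    by_cases h2 : r - 1 ≤ n
    · rw [if_pos h2, if_neg ?_]
      · ring
      · intro hd
        apply h
        obtain ⟨c, hc⟩ := hd
        exact ⟨c + 1, by rw [Nat.mul_add, Nat.mul_one]; omega⟩
    · rw [if_neg h2]; ring

lemma deriv_xser (r : ℕ) (hr : 1 ≤ r) :
    derivative ℚ (xser r) = (1 - C (r:ℚ) * X^r) * expNegZr r := by
  rw [xser, Derivation.leibniz, smul_eq_mul, smul_eq_mul, derivative_X,
    deriv_expNegZr r hr]
  have : X * (C (-(r:ℚ)) * X^(r-1) * expNegZr r)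
      = C (-(r:ℚ)) * (X * X^(r-1)) * expNegZr r := by ring
  rw [this, ← pow_succ' (X : PowerSeries ℚ) (r-1), show r - 1 + 1 = r by omega, map_neg]
  ring

lemma eulerOp_xser_pow (r : ℕ) (hr : 1 ≤ r) (m : ℕ) :
    eulerOp r ((xser r)^m) = (m : ℚ) • (xser r)^m := by
  rw [eulerOp, Derivation.leibniz_pow, deriv_xser r hr]
  rcases Nat.eq_zero_or_pos m with rfl | hm
  · simp
  · rw [nsmul_eq_mul, smul_eq_mul]
    have : (X : PowerSeries ℚ) * (1 - C (r:ℚ) * X^r)⁻¹ *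
        ((m:ℚ⟦X⟧) * ((xser r)^(m-1) * ((1 - C (r:ℚ) * X^r) * expNegZr r)))
        = (m:ℚ⟦X⟧) * ((xser r)^(m-1) * (X * expNegZr r)) *
          ((1 - C (r:ℚ) * X^r) * (1 - C (r:ℚ) * X^r)⁻¹) := by ring
    rw [this, PowerSeries.mul_inv_cancel _ (constCoeff_unit r hr), mul_one, ← xser,
      ← pow_succ, show m - 1 + 1 = m by omega, PowerSeries.smul_eq_C_mul, map_natCast]

lemma fwdDiff_poly (c e : ℚ) (j : ℕ) :
    Δ_[(1:ℕ)] (fun σ : ℕ => (c*σ+e)^j)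
      = ∑ i ∈ range j, ((j.choose i : ℚ) * c^(j-i)) • (fun σ : ℕ => (c*σ+e)^i) := by
  funext σ
  have h1 : (c*(σ+1:ℕ)+e) = (c*σ+e) + c := by push_cast; ring
  have h2 : ((c*σ+e) + c)^j = ∑ i ∈ range (j+1), (c*σ+e)^i * c^(j-i) * (j.choose i) :=
    add_pow _ _ _
  simp only [fwdDiff, h1, h2, Finset.sum_range_succ, Nat.choose_self, Nat.sub_self, pow_zero,
    Nat.cast_one, mul_one, add_sub_cancel_right, Finset.sum_apply, Pi.smul_apply, smul_eq_mul]
  apply Finset.sum_congr rfl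
  intro i _; ring

lemma fd_lt (c e : ℚ) : ∀ N, ∀ j < N, (fwdDiff (1:ℕ))^[N] (fun σ : ℕ => (c*σ+e)^j) = fun _ => 0 := by
  intro N
  induction N with
  | zero => omega
  | succ N IH =>
    intro j hj
    rw [Function.iterate_succ_apply, fwdDiff_poly, fwdDiff_iter_finset_sum]
    funext σ
    rw [Finset.sum_apply]
    apply Finset.sum_eq_zero
    intro i hi
    simp only [Finset.mem_range] at hi
    rw [fwdDiff_iter_const_smul, IH i (by omega)]
    simp

lemma fd_eq (c e : ℚ) : ∀ N, (fwdDiff (1:ℕ))^[N] (fun σ : ℕ => (c*σ+e)^N)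
    = fun _ => (N.factorial : ℚ) * c^N := by
  intro N
  induction N with
  | zero => funext σ; simp
  | succ N IH =>
    rw [Function.iterate_succ_apply, fwdDiff_poly, fwdDiff_iter_finset_sum,
      Finset.sum_range_succ]
    funext σ
    rw [Pi.add_apply, Finset.sum_apply]
    rw [Finset.sum_eq_zero (fun i hi => by
      simp only [Finset.mem_range] at hi
      rw [fwdDiff_iter_const_smul, fd_lt c e N i hi]; simp)]
    rw [fwdDiff_iter_const_smul, IH]
    simp only [Pi.smul_apply, smul_eq_mul, zero_add]
    rw [Nat.choose_succ_self_right]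
    rw [show N + 1 - N = 1 by omega]
    push_cast [Nat.factorial_succ]
    ring

lemma alt_sum (c e : ℚ) (N : ℕ) :
    ∑ σ ∈ range (N+1), ((-1:ℚ))^(N-σ) * (N.choose σ) * (c*σ+e)^N
      = (N.factorial : ℚ) * c^N := by
  have h := fwdDiff_iter_eq_sum_shift (1:ℕ) (fun σ : ℕ => (c*σ+e)^N) N 0
  rw [fd_eq c e N] at h
  simp only [zero_add, smul_eq_mul, mul_one, zsmul_eq_mul] at h
  push_cast at h
  rw [← h]

lemma base_sum (r η N : ℕ) :
    ∑ σ ∈ range (N+1), ((r*σ+η:ℚ))^σ / σ.factorial * ((-((r:ℚ)*σ+η))^(N-σ) / (N-σ).factorial)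
      = (r:ℚ)^N := by
  have key : ∀ σ ∈ range (N+1),
      ((r*σ+η:ℚ))^σ / σ.factorial * ((-((r:ℚ)*σ+η))^(N-σ) / (N-σ).factorial)
        = ((-1:ℚ))^(N-σ) * (N.choose σ) * ((r:ℚ)*σ+η)^N / N.factorial := by
    intro σ hσ
    simp only [Finset.mem_range] at hσ
    have hσN : σ ≤ N := by omega
    have hc : (N.choose σ : ℚ) * σ.factorial * (N-σ).factorial = N.factorial := by
      exact_mod_cast congrArg (Nat.cast : ℕ → ℚ) (Nat.choose_mul_factorial_mul_factorial hσN)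
    have hp : ((r:ℚ)*σ+η)^σ * ((r:ℚ)*σ+η)^(N-σ) = ((r:ℚ)*σ+η)^N := by
      rw [← pow_add]; congr 1; omega
    rw [neg_pow, div_mul_div_comm]
    rw [div_eq_div_iff (by positivity) (factq N)]
    push_cast
    linear_combination ((-1:ℚ))^(N-σ) * (N.factorial:ℚ) * hp
      - ((-1:ℚ))^(N-σ) * ((r:ℚ)*(σ:ℚ)+(η:ℚ))^N * hc
  rw [Finset.sum_congr rfl key, ← Finset.sum_div, alt_sum (r:ℚ) (η:ℚ) N]
  rw [mul_comm, mul_div_assoc, div_self (factq N), mul_one]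
lemma eulerOp_coeff_congr (r : ℕ) (f g : PowerSeries ℚ) (d : ℕ)
    (hfg : ∀ e ≤ d, coeff e f = coeff e g) :
    coeff d (eulerOp r f) = coeff d (eulerOp r g) := by
  have key : coeff d (eulerOp r f) - coeff d (eulerOp r g) = 0 := by
    rw [← map_sub]
    have h1 : eulerOp r f - eulerOp r g
        = X * ((1 - C (r:ℚ) * X^r)⁻¹ * derivative ℚ (f - g)) := by
      rw [eulerOp, eulerOp, map_sub]; ring
    rw [h1]
    rcases d with _ | e
    · exact coeff_zero_X_mul _
    · rw [coeff_succ_X_mul, coeff_mul]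
      apply Finset.sum_eq_zero
      intro p hp
      rw [Finset.HasAntidiagonal.mem_antidiagonal] at hp
      have : coeff p.2 (derivative ℚ (f - g)) = 0 := by
        rw [coeff_derivative, map_sub, hfg (p.2+1) (by omega), sub_self, zero_mul]
      rw [this, mul_zero]
  linarith [key]

lemma eulerOp_sum_smul (r : ℕ) {α : Type*} (s : Finset α) (c : α → ℚ)
    (f : α → PowerSeries ℚ) :
    eulerOp r (∑ σ ∈ s, c σ • f σ) = ∑ σ ∈ s, c σ • eulerOp r (f σ) := by
  simp only [eulerOp, map_sum, Derivation.map_smul, Finset.mul_sum, mul_smul_comm]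

lemma keyClaim (r η : ℕ) (hr : 1 ≤ r) (hη : 1 ≤ η) (k : ℕ) : ∀ d : ℕ,
    ∑ σ ∈ range (d+1), (((r*σ+η:ℕ)):ℚ)^(σ+k) / σ.factorial * coeff d ((xser r)^(r*σ+η))
      = coeff d (basisFun r η k) := by
  induction k with
  | zero =>
    intro d
    rw [basisFun, Function.iterate_zero, id_eq, Gser_eq r hr, coeff_X_pow_mul']
    by_cases hc : η ≤ d ∧ r ∣ (d - η)
    · obtain ⟨hηd, hdvd⟩ := hc
      obtain ⟨N, hN⟩ := hdvd
      rw [if_pos hηd]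
      simp only [Gser, coeff_mk]
      rw [if_pos ⟨N, hN⟩, hN, Nat.mul_div_cancel_left _ (by omega)]
      have hNd : N ≤ d := by
        have : N ≤ r*N := Nat.le_mul_of_pos_left N (by omega)
        omega
      rw [← Finset.sum_subset (Finset.range_subset_range.mpr (by omega : N+1 ≤ d+1)) ?_]
      · rw [← base_sum r η N]
        apply Finset.sum_congr rfl
        intro σ hσ
        simp only [Finset.mem_range] at hσ
        have hσN : σ ≤ N := by omega
        have h1 : r*σ ≤ r*N := Nat.mul_le_mul_left r hσN
        have h2 : r*σ + η ≤ d := by omega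
        have h3 : d - (r*σ+η) = r*(N - σ) := by
          rw [Nat.mul_comm r (N-σ), Nat.sub_mul, Nat.mul_comm N r, Nat.mul_comm σ r]; omega
        rw [coeff_xser_pow r hr, if_pos ⟨h2, ⟨N - σ, h3⟩⟩, h3,
          Nat.mul_div_cancel_left _ (by omega)]
        have hcast : ((r*σ+η : ℕ) : ℚ) = (r:ℚ)*σ+η := by push_cast; ring
        rw [add_zero, hcast]
      · intro σ hσ hσn
        simp only [Finset.mem_range] at hσ hσn
        have hσN : N + 1 ≤ σ := by omega
        have h1 : r*(N+1) ≤ r*σ := Nat.mul_le_mul_left r hσN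
        have h2 : ¬ (r*σ + η ≤ d) := by rw [Nat.mul_add, Nat.mul_one] at h1; omega
        rw [coeff_xser_pow r hr, if_neg (by tauto), mul_zero]
    · push_neg at hc
      have hrhs : (if η ≤ d then coeff (d-η) (Gser r) else 0) = 0 := by
        by_cases hle : η ≤ d
        · rw [if_pos hle]
          simp only [Gser, coeff_mk]
          rw [if_neg (hc hle)]
        · rw [if_neg hle]
      rw [hrhs]
      apply Finset.sum_eq_zero
      intro σ hσ
      rw [coeff_xser_pow r hr]
      by_cases hcc : r*σ + η ≤ d ∧ r ∣ (d - (r*σ+η))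
      · exfalso
        obtain ⟨h1, hdd⟩ := hcc
        obtain ⟨c2, h2⟩ := hdd
        have hηd : η ≤ d := by omega
        have he : d - η = r*c2 + r*σ := by omega
        exact hc hηd ⟨c2 + σ, by rw [he, Nat.mul_add]⟩
      · rw [if_neg hcc, mul_zero]
  | succ k IH =>
    intro d
    have hb : basisFun r η (k+1) = eulerOp r (basisFun r η k) := by
      rw [basisFun, basisFun, Function.iterate_succ_apply']
    rw [hb]
    set A : PowerSeries ℚ :=
      ∑ σ ∈ range (d+1), ((((r*σ+η:ℕ):ℚ))^(σ+k) / (σ.factorial : ℚ)) • (xser r)^(r*σ+η) with hA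
    have h1 : ∀ e ≤ d, coeff e (basisFun r η k) = coeff e A := by
      intro e he
      rw [hA, map_sum]
      simp only [map_smul, smul_eq_mul]
      rw [← IH e]
      apply Finset.sum_subset (Finset.range_subset_range.mpr (by omega : e+1 ≤ d+1))
      intro σ hσ hσn
      simp only [Finset.mem_range] at hσ hσn
      have h2 : ¬ (r*σ + η ≤ e) := by
        have : σ ≤ r * σ := Nat.le_mul_of_pos_left σ (by omega)
        omega
      rw [coeff_xser_pow r hr, if_neg (by tauto), mul_zero]
    rw [← eulerOp_coeff_congr r A (basisFun r η k) d (fun e he => (h1 e he).symm)]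
    rw [hA, eulerOp_sum_smul, map_sum]
    apply Finset.sum_congr rfl
    intro σ hσ
    rw [eulerOp_xser_pow r hr, map_smul, map_smul, smul_eq_mul, smul_eq_mul]
    rw [show σ+(k+1) = (σ+k)+1 by omega, pow_succ]
    ring
lemma weight_eq (r η σ k : ℕ) (hr : 1 ≤ r) (h1 : 1 ≤ η) (h2 : η ≤ r) :
    ((r*σ+η:ℕ):ℚ)^((r*σ+η)/r) / ((r*σ+η)/r).factorial * ((r*σ+η:ℕ):ℚ)^k
      = (if η = r then (r:ℚ) else 1) * (((r*σ+η:ℕ):ℚ)^(σ+k) / σ.factorial) := by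
  by_cases hcase : η = r
  · subst hcase
    have hdiv : (η*σ+η)/η = σ+1 := by
      rw [show η*σ+η = η*(σ+1) by ring, Nat.mul_div_cancel_left _ (by omega)]
    have hA : ((η*σ+η : ℕ):ℚ) = (η:ℚ)*((σ:ℚ)+1) := by push_cast; ring
    rw [hdiv, if_pos rfl, hA, Nat.factorial_succ]
    push_cast
    have hz1 : ((σ:ℚ)+1) ≠ 0 := by positivity
    field_simp
    rw [pow_succ, pow_add]
    ring
  · have hlt : η < r := by omega
    have hdiv : (r*σ+η)/r = σ := by
      rw [show r*σ+η = η + r*σ by ring, Nat.add_mul_div_left _ _ (by omega : 0 < r),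
        Nat.div_eq_of_lt hlt, Nat.zero_add]
    rw [hdiv, if_neg hcase, one_mul, pow_add, div_mul_eq_mul_div]


end Aux

open Classical in
/-- Quasi-polynomiality implies rationality of the `n`-point generating function:
if `h_{g,μ} = b!·(∏ μ_i^{⌊μ_i/r⌋}/⌊μ_i/r⌋!)·P(μ)` with `b = 2g-2+n+|μ|/r` and `P`
a polynomial whose coefficients depend only on the residues `μ_i mod r`, then
`H_{g,n}(x₁,…,x_n) = ∑_μ (h_{g,μ}/b!) ∏ x_i^{μ_i}`, after `x_i = z_i e^{-z_i^r}`,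
is (coefficientwise in `z₁,…,z_n`) a finite linear combination of products of the
functions `((z/(1-rz^r)) d/dz)^j (z^η/(1-rz^r))`. -/
theorem stmt_18 (r n g : ℕ) (hr : 1 ≤ r) (hstab : 2 < 2*g + n)
    (h : (Fin n → ℕ) → ℚ)
    (P : (Fin n → ℕ) → MvPolynomial (Fin n) ℚ)
    (hP : ∀ μ ν : Fin n → ℕ, (∀ i, μ i % r = ν i % r) → P μ = P ν)
    (hquasi : ∀ μ : Fin n → ℕ, (∀ i, 1 ≤ μ i) → r ∣ ∑ i, μ i →
      h μ = ((2*g + n + (∑ i, μ i)/r - 2).factorial : ℚ)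
            * (∏ i, ((μ i : ℚ))^(μ i / r) / ((μ i / r).factorial : ℚ))
            * MvPolynomial.eval (fun i => (μ i : ℚ)) (P μ)) :
    ∃ (T : Finset ((Fin n → ℕ) × (Fin n → ℕ))) (coef : (Fin n → ℕ) × (Fin n → ℕ) → ℚ),
      ∀ d : Fin n → ℕ,
        (∑ μ ∈ Fintype.piFinset (fun i => Finset.range (d i + 1)),
          if (∀ i, 1 ≤ μ i) ∧ r ∣ ∑ i, μ i then
            (h μ / ((2*g + n + (∑ i, μ i)/r - 2).factorial : ℚ))
              * ∏ i, PowerSeries.coeff (d i) ((xser r)^(μ i))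
          else 0)
        = ∑ t ∈ T, coef t * ∏ i, PowerSeries.coeff (d i) (basisFun r (t.1 i) (t.2 i)) := by
  classical
  set IccR : Finset (Fin n → ℕ) := Fintype.piFinset (fun _ : Fin n => Finset.Icc 1 r) with hIccR
  set K : Finset (Fin n → ℕ) :=
    IccR.biUnion (fun η' => (P η').support.image fun m : (Fin n) →₀ ℕ => ⇑m) with hK
  refine ⟨IccR ×ˢ K, fun t =>
    if t.1 ∈ IccR ∧ r ∣ ∑ i, t.1 i then
      (∏ i, if t.1 i = r then (r:ℚ) else 1) *
        MvPolynomial.coeff (Finsupp.equivFunOnFinite.symm t.2) (P t.1)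
    else 0, ?_⟩
  intro d
  set term : (Fin n → ℕ) → ℚ := fun μ =>
    if (∀ i, 1 ≤ μ i) ∧ r ∣ ∑ i, μ i then
      (h μ / ((2*g + n + (∑ i, μ i)/r - 2).factorial : ℚ))
        * ∏ i, PowerSeries.coeff (d i) ((xser r)^(μ i))
    else 0 with hterm
  have hvan1 : ∀ μ : Fin n → ℕ, (∃ i, d i < μ i) → term μ = 0 := by
    rintro μ ⟨i, hi⟩
    rw [hterm]
    simp only
    split_ifs with hcond
    · have hz : coeff (d i) ((xser r)^(μ i)) = 0 := by
        rw [coeff_xser_pow r hr, if_neg (fun hcc => by omega)]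
      rw [Finset.prod_eq_zero (Finset.mem_univ i) hz, mul_zero]
    · rfl
  have hvan0 : ∀ μ : Fin n → ℕ, (∃ i, μ i = 0) → term μ = 0 := by
    rintro μ ⟨i, hi⟩
    rw [hterm]
    simp only
    rw [if_neg (fun hcond => by have := hcond.1 i; omega)]
  have hbig1 : ∑ μ ∈ Fintype.piFinset (fun i => Finset.range (d i + 1)), term μ
      = ∑ μ ∈ Fintype.piFinset (fun i => Finset.range (r * d i + r + 1)), term μ := by
    apply Finset.sum_subset
    · apply Fintype.piFinset_subset
      intro i
      apply Finset.range_subset_range.mpr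
      have : d i ≤ r * d i := Nat.le_mul_of_pos_left _ (by omega)
      omega
    · intro μ hμ hnμ
      apply hvan1
      simp only [Fintype.mem_piFinset, Finset.mem_range] at hμ hnμ
      push_neg at hnμ
      obtain ⟨i, hi⟩ := hnμ
      exact ⟨i, by omega⟩
  have hbig2 : ∑ μ ∈ Fintype.piFinset (fun i => Finset.Icc 1 (r * d i + r)), term μ
      = ∑ μ ∈ Fintype.piFinset (fun i => Finset.range (r * d i + r + 1)), term μ := by
    apply Finset.sum_subset
    · apply Fintype.piFinset_subset
      intro i
      intro x hx
      simp only [Finset.mem_Icc] at hx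
      simp only [Finset.mem_range]
      omega
    · intro μ hμ hnμ
      apply hvan0
      simp only [Fintype.mem_piFinset, Finset.mem_range] at hμ
      simp only [Fintype.mem_piFinset, Finset.mem_Icc] at hnμ
      push_neg at hnμ
      obtain ⟨i, hi⟩ := hnμ
      exact ⟨i, by have := hμ i; omega⟩
  rw [hbig1, ← hbig2]
  have hre : ∑ μ ∈ Fintype.piFinset (fun i => Finset.Icc 1 (r * d i + r)), term μ
      = ∑ p ∈ IccR ×ˢ Fintype.piFinset (fun i => Finset.range (d i + 1)),
          term (fun i => r * p.2 i + p.1 i) := by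
    apply Finset.sum_nbij'
      (i := fun μ => (⟨fun i => μ i - r*((μ i - 1)/r), fun i => (μ i - 1)/r⟩ :
        (Fin n → ℕ) × (Fin n → ℕ)))
      (j := fun p => fun i => r * p.2 i + p.1 i)
    · intro μ hμ
      simp only [Fintype.mem_piFinset, Finset.mem_Icc] at hμ
      rw [Finset.mem_product]
      constructor
      · rw [hIccR]
        simp only [Fintype.mem_piFinset, Finset.mem_Icc]
        intro i
        have h1 := (hμ i).1
        have h2 := (hμ i).2
        have hd := Nat.div_add_mod (μ i - 1) r
        have hlt : (μ i - 1) % r < r := Nat.mod_lt _ (by omega)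
        omega
      · simp only [Fintype.mem_piFinset, Finset.mem_range]
        intro i
        have h1 := (hμ i).1
        have h2 := (hμ i).2
        have hd := Nat.div_add_mod (μ i - 1) r
        have hlt : (μ i - 1) % r < r := Nat.mod_lt _ (by omega)
        by_contra hq
        have h5 : r*(d i+1) ≤ r*((μ i - 1)/r) := Nat.mul_le_mul_left r (by omega)
        rw [Nat.mul_add, Nat.mul_one] at h5
        omega
    · intro p hp
      rw [Finset.mem_product] at hp
      obtain ⟨hp1, hp2⟩ := hp
      rw [hIccR] at hp1
      simp only [Fintype.mem_piFinset, Finset.mem_Icc] at hp1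
      simp only [Fintype.mem_piFinset, Finset.mem_range] at hp2
      simp only [Fintype.mem_piFinset, Finset.mem_Icc]
      intro i
      have h1 := (hp1 i).1
      have h2 := (hp1 i).2
      have h3 := hp2 i
      have h4 : r * p.2 i ≤ r * d i := Nat.mul_le_mul_left r (by omega)
      omega
    · intro μ hμ
      simp only [Fintype.mem_piFinset, Finset.mem_Icc] at hμ
      funext i
      show r * ((μ i - 1) / r) + (μ i - r * ((μ i - 1) / r)) = μ i
      have h1 := (hμ i).1
      have hd := Nat.div_add_mod (μ i - 1) r
      omega
    · intro p hp
      rw [Finset.mem_product] at hp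
      obtain ⟨hp1, hp2⟩ := hp
      rw [hIccR] at hp1
      simp only [Fintype.mem_piFinset, Finset.mem_Icc] at hp1
      have key : ∀ i, (r * p.2 i + p.1 i - 1)/r = p.2 i := by
        intro i
        have h1 := (hp1 i).1
        have h2 := (hp1 i).2
        have e1 : r * p.2 i + p.1 i - 1 = (p.1 i - 1) + r * p.2 i := by omega
        rw [e1, Nat.add_mul_div_left _ _ (by omega : 0 < r),
          Nat.div_eq_of_lt (by omega), Nat.zero_add]
      have e2 : (fun i => r * p.2 i + p.1 i) = fun i => r * p.2 i + p.1 i := rfl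
      refine Prod.ext ?_ ?_
      · funext i
        simp only
        rw [key i]
        have h1 := (hp1 i).1
        omega
      · funext i
        simp only
        rw [key i]
    · intro μ hμ
      congr 1
      funext i
      show μ i = r * ((μ i - 1) / r) + (μ i - r * ((μ i - 1) / r))
      simp only [Fintype.mem_piFinset, Finset.mem_Icc] at hμ
      have h1 := (hμ i).1
      have hd := Nat.div_add_mod (μ i - 1) r
      omega
  rw [hre, Finset.sum_product, Finset.sum_product]
  apply Finset.sum_congr rfl
  intro η' hη'
  have hη'mem : ∀ i, 1 ≤ η' i ∧ η' i ≤ r := by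
    rw [hIccR] at hη'
    simp only [Fintype.mem_piFinset, Finset.mem_Icc] at hη'
    exact hη'
  by_cases hdvd : r ∣ ∑ i, η' i
  · -- main case
    have hstep1 : ∀ σ : Fin n → ℕ, σ ∈ Fintype.piFinset (fun i => Finset.range (d i + 1)) →
        term (fun i => r * σ i + η' i)
          = ∑ m ∈ (P η').support, MvPolynomial.coeff m (P η') *
              ((∏ i, if η' i = r then (r:ℚ) else 1) *
                ∏ i, ((((r * σ i + η' i : ℕ)):ℚ)^(σ i + m i) / (σ i).factorial *
                  coeff (d i) ((xser r)^(r * σ i + η' i)))) := by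
      intro σ hσ
      have hsum : ∑ i, (r * σ i + η' i) = r * ∑ i, σ i + ∑ i, η' i := by
        rw [Finset.sum_add_distrib, Finset.mul_sum]
      have hco1 : ∀ i, 1 ≤ r * σ i + η' i := fun i => by have := (hη'mem i).1; omega
      have hco2 : r ∣ ∑ i, (r * σ i + η' i) := by
        rw [hsum]; exact Nat.dvd_add (Dvd.intro _ rfl) hdvd
      rw [hterm]
      simp only
      rw [if_pos ⟨hco1, hco2⟩]
      rw [hquasi _ hco1 hco2, mul_assoc, mul_div_cancel_left₀ _ (factq _)]
      rw [hP (fun i => r * σ i + η' i) η' (fun i => Nat.mul_add_mod r (σ i) (η' i))]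
      rw [MvPolynomial.eval_eq]
      conv_lhs => rw [Finset.mul_sum, Finset.sum_mul]
      apply Finset.sum_congr rfl
      intro m hm
      have hup : ∏ i ∈ m.support, ((r * σ i + η' i : ℕ):ℚ) ^ m i
          = ∏ i : Fin n, ((r * σ i + η' i : ℕ):ℚ) ^ m i := by
        apply Finset.prod_subset (Finset.subset_univ _)
        intro i _ hni
        rw [Finsupp.notMem_support_iff.mp hni, pow_zero]
      rw [hup]
      have hwe : ∀ i, ((r * σ i + η' i : ℕ):ℚ)^((r * σ i + η' i) / r) /
            ((r * σ i + η' i) / r).factorial * ((r * σ i + η' i : ℕ):ℚ)^(m i) *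
            coeff (d i) ((xser r)^(r * σ i + η' i))
          = (if η' i = r then (r:ℚ) else 1) *
            ((((r * σ i + η' i : ℕ)):ℚ)^(σ i + m i) / (σ i).factorial *
              coeff (d i) ((xser r)^(r * σ i + η' i))) := by
        intro i
        rw [weight_eq r (η' i) (σ i) (m i) hr (hη'mem i).1 (hη'mem i).2]
        ring
      conv_rhs => rw [← Finset.prod_mul_distrib,
        Finset.prod_congr rfl (fun i _ => (hwe i).symm), Finset.prod_mul_distrib,
        Finset.prod_mul_distrib]
      ring
    rw [Finset.sum_congr rfl hstep1]
    rw [Finset.sum_comm]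
    have hstep2 : ∀ m ∈ (P η').support,
        ∑ σ ∈ Fintype.piFinset (fun i => Finset.range (d i + 1)),
          MvPolynomial.coeff m (P η') *
            ((∏ i, if η' i = r then (r:ℚ) else 1) *
              ∏ i, ((((r * σ i + η' i : ℕ)):ℚ)^(σ i + m i) / (σ i).factorial *
                coeff (d i) ((xser r)^(r * σ i + η' i))))
        = MvPolynomial.coeff m (P η') *
            ((∏ i, if η' i = r then (r:ℚ) else 1) *
              ∏ i, coeff (d i) (basisFun r (η' i) (m i))) := by
      intro m hm
      rw [← Finset.mul_sum, ← Finset.mul_sum]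
      congr 2
      have hps := Finset.prod_univ_sum (t := fun i : Fin n => Finset.range (d i + 1))
        (f := fun i s => (((r * s + η' i : ℕ)):ℚ)^(s + m i) / (s : ℕ).factorial *
          coeff (d i) ((xser r)^(r * s + η' i)))
      rw [← hps]
      apply Finset.prod_congr rfl
      intro i _
      exact keyClaim r (η' i) hr (hη'mem i).1 (m i) (d i)
    rw [Finset.sum_congr rfl hstep2]
    -- now the RHS
    have hKsub : (P η').support.image (fun m : (Fin n) →₀ ℕ => ⇑m) ⊆ K := by
      rw [hK]
      exact Finset.subset_biUnion_of_mem (fun η' => (P η').support.image fun m : (Fin n) →₀ ℕ => ⇑m) hη'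
    refine Eq.trans ?_ (Finset.sum_subset hKsub ?_)
    · rw [Finset.sum_image (fun a _ b _ hab => by
        exact (DFunLike.coe_injective hab : a = b))]
      apply Finset.sum_congr rfl
      intro m hm
      dsimp only
      rw [if_pos ⟨hη', hdvd⟩, Finsupp.equivFunOnFinite_symm_coe]
      ring
    · intro k hk hnk
      dsimp only
      rw [if_pos ⟨hη', hdvd⟩]
      have hz : MvPolynomial.coeff (Finsupp.equivFunOnFinite.symm k) (P η') = 0 := by
        by_contra hc
        apply hnk
        rw [Finset.mem_image]
        refine ⟨Finsupp.equivFunOnFinite.symm k, MvPolynomial.mem_support_iff.mpr hc, ?_⟩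
        exact Finsupp.equivFunOnFinite.apply_symm_apply k
      rw [hz, mul_zero, zero_mul]
  · -- degenerate case: both sides zero
    rw [Finset.sum_eq_zero, Finset.sum_eq_zero]
    · intro k hk
      dsimp only
      rw [if_neg (fun hc => hdvd hc.2), zero_mul]
    · intro σ hσ
      rw [hterm]
      simp only
      rw [if_neg]
      rintro ⟨h1, h2⟩
      have hsum : ∑ i, (r * σ i + η' i) = r * ∑ i, σ i + ∑ i, η' i := by
        rw [Finset.sum_add_distrib, Finset.mul_sum]
      rw [hsum] at h2
      exact hdvd ((Nat.dvd_add_right (Dvd.intro _ rfl)).mp h2)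

end
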